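/- For the tridiagonal symmetric integer matrix A with diagonal entries −b_1, ..., −b_n and off-diagonal entries 1 (i.e. A_{ii} = −b_i, A_{i,i+1} = A_{i+1,i} = 1, all other entries 0), and vectors v_0, v_1, ..., v_{n+1} in ℝ^2 satisfying v_{i+1} + v_{i−1} = b_i v_i for i = 1, ..., n, one has v_{n+1} = (−1)^n det(A) · v_1 + (−1)^n δ(b_2, ..., b_n) · v_0, where δ(b_2, ..., b_n) is the determinant of the corresponding (n−1)×(n−1) tridiagonal matrix with diagonal −b_2, ..., −b_n (and δ of the empty sequence is 1). -/

import Mathlib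

/-- The `n × n` tridiagonal matrix with diagonal `-b 0, ..., -b (n-1)` and off-diagonal
entries `1`. -/
def triMat (b : ℕ → ℝ) (n : ℕ) : Matrix (Fin n) (Fin n) ℝ :=
  Matrix.of fun i j =>
    if (i : ℕ) = (j : ℕ) then -(b (i : ℕ))
    else if (i : ℕ) + 1 = (j : ℕ) ∨ (j : ℕ) + 1 = (i : ℕ) then 1 else 0

lemma triMat_det_zero (b : ℕ → ℝ) : (triMat b 0).det = 1 := by
  simp [Matrix.det_fin_zero]

lemma triMat_det_one (b : ℕ → ℝ) : (triMat b 1).det = -(b 0) := by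
  simp [Matrix.det_fin_one, triMat]

lemma triMat_det_rec (b : ℕ → ℝ) (n : ℕ) :
    (triMat b (n + 2)).det =
      -(b 0) * (triMat (fun i => b (i + 1)) (n + 1)).det
        - (triMat (fun i => b (i + 2)) n).det := by
  rw [Matrix.det_succ_row_zero]
  rw [Fin.sum_univ_succ, Fin.sum_univ_succ]
  have hsum : (∑ j : Fin n, (-1 : ℝ) ^ ((j.succ.succ : Fin (n+2)) : ℕ) *
      triMat b (n+2) 0 j.succ.succ *
      ((triMat b (n+2)).submatrix Fin.succ (j.succ.succ).succAbove).det) = 0 := by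
    apply Finset.sum_eq_zero
    intro j _
    have : triMat b (n+2) 0 j.succ.succ = 0 := by simp [triMat]
    rw [this]; ring
  rw [hsum]
  have h00 : triMat b (n+2) 0 0 = -(b 0) := by simp [triMat]
  have h01 : triMat b (n+2) 0 (0 : Fin (n+1)).succ = 1 := by simp [triMat]
  have hM0 : (triMat b (n+2)).submatrix Fin.succ (0 : Fin (n+2)).succAbove =
      triMat (fun i => b (i + 1)) (n + 1) := by
    ext i j
    simp only [Matrix.submatrix_apply, Fin.succAbove_zero, triMat, Matrix.of_apply,
      Fin.val_succ]
    split_ifs <;> first | rfl | omega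
  set M1 := (triMat b (n+2)).submatrix Fin.succ ((0 : Fin (n+1)).succ).succAbove with hM1def
  have hdetM1 : M1.det = (triMat (fun i => b (i + 2)) n).det := by
    rw [Matrix.det_succ_column_zero, Fin.sum_univ_succ]
    have hrest : (∑ i : Fin n, (-1 : ℝ) ^ ((i.succ : Fin (n+1)) : ℕ) *
        M1 i.succ 0 * (M1.submatrix i.succ.succAbove Fin.succ).det) = 0 := by
      apply Finset.sum_eq_zero
      intro i _
      have : M1 i.succ 0 = 0 := by
        simp [hM1def, triMat, Fin.succAbove, Fin.lt_def]
      rw [this]; ring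
    rw [hrest]
    have hM10 : M1 0 0 = 1 := by
      simp [hM1def, triMat, Fin.succAbove, Fin.lt_def]
    have hsub : M1.submatrix (0 : Fin (n+1)).succAbove Fin.succ =
        triMat (fun i => b (i + 2)) n := by
      ext i j
      simp only [hM1def, Matrix.submatrix_apply, Fin.succAbove_zero,
        Fin.succ_succAbove_succ, triMat, Matrix.of_apply, Fin.val_succ]
      split_ifs <;> first | rfl | omega
    rw [hM10, hsub]
    simp
  rw [h00, h01, hM0, hdetM1]
  simp [Fin.val_succ]
  ring

lemma key : ∀ n : ℕ, 1 ≤ n → ∀ (b : ℕ → ℝ) (v : ℕ → ℝ × ℝ),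
    (∀ i, 1 ≤ i → i ≤ n → v (i + 1) + v (i - 1) = b i • v i) →
    v (n + 1) =
      ((-1 : ℝ) ^ n * (triMat (fun i => b (i + 1)) n).det) • v 1 +
      ((-1 : ℝ) ^ n * (triMat (fun i => b (i + 2)) (n - 1)).det) • v 0 := by
  intro n
  induction n with
  | zero => intro h; omega
  | succ m IH =>
    intro _ b v hrec
    rcases Nat.eq_zero_or_pos m with hm | hm
    · subst hm
      have h1 := hrec 1 le_rfl le_rfl
      have : v 2 = b 1 • v 1 - v 0 := by
        rw [← h1]; abel
      rw [show (1:ℕ)+1 = 2 from rfl, this, triMat_det_one, triMat_det_zero]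
      simp
      module
    · -- m ≥ 1
      have hrec' : ∀ i, 1 ≤ i → i ≤ m →
          (fun k => v (k + 1)) (i + 1) + (fun k => v (k + 1)) (i - 1)
            = (fun k => b (k + 1)) i • (fun k => v (k + 1)) i := by
        intro i hi him
        simp only
        have := hrec (i + 1) (by omega) (by omega)
        have e : i - 1 + 1 = i := by omega
        rw [e]
        simpa using this
      have hIH := IH hm (fun k => b (k + 1)) (fun k => v (k + 1)) hrec'
      have h1 := hrec 1 (by omega) (by omega)
      have hv2 : v 2 = b 1 • v 1 - v 0 := by
        rw [← h1]; abel
      obtain ⟨p, rfl⟩ : ∃ p, m = p + 1 := ⟨m - 1, by omega⟩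
      have hdet := triMat_det_rec (fun i => b (i + 1)) p
      simp only [show p + 1 + 1 = p + 2 from rfl] at *
      rw [show p + 2 - 1 = p + 1 from rfl]
      rw [show p + 1 - 1 = p from rfl] at hIH
      rw [show p + 1 + 1 = p + 2 from rfl, show p + 2 + 1 = p + 3 from rfl] at hIH
      rw [show p + 2 + 1 = p + 3 from rfl, hIH, hdet, hv2]
      module

/-- The determinant identity of Lemma 3.10: if `v (i+1) + v (i-1) = b i • v i` for
`i = 1, ..., n`, then `v (n+1) = (-1)^n det(A) • v 1 + (-1)^n δ(b 2, ..., b n) • v 0`,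
where `A` is the tridiagonal intersection matrix of `-b 1, ..., -b n`. -/
theorem stmt_10 (n : ℕ) (hn : 1 ≤ n) (b : ℕ → ℝ) (v : ℕ → ℝ × ℝ)
    (hrec : ∀ i, 1 ≤ i → i ≤ n → v (i + 1) + v (i - 1) = b i • v i) :
    v (n + 1) =
      ((-1 : ℝ) ^ n * (triMat (fun i => b (i + 1)) n).det) • v 1 +
      ((-1 : ℝ) ^ n * (triMat (fun i => b (i + 2)) (n - 1)).det) • v 0 := by
  exact key n hn b v hrec
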